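/- Let λ and μ be partitions of n, t₁ a λ-tableau and t₂ a μ-tableau (bijective fillings of the respective Young diagrams with {1,…,n}). Suppose that for each i, the entries of the i-th row of t₂ lie in distinct columns of t₁. Then λ dominates μ, i.e., for every j, Σ_{i=1}^{j} λᵢ ≥ Σ_{i=1}^{j} μᵢ. -/

import Mathlib

lemma aux_card (Y : YoungDiagram) (j : ℕ) :
    (Y.cells.filter (fun c => c.1 < j)).card = ∑ i ∈ Finset.range j, Y.rowLen i := by
  rw [Finset.card_eq_sum_card_fiberwise (f := fun c => c.1) (t := Finset.range j)
    (by intro c hc; simp only [Finset.mem_coe, Finset.mem_filter] at hc; simpa using hc.2)]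
  refine Finset.sum_congr rfl fun i hi => ?_
  rw [Y.rowLen_eq_card]
  congr 1
  ext c
  simp only [Finset.mem_filter, YoungDiagram.mem_row_iff, YoungDiagram.mem_cells,
    Finset.mem_range] at *
  constructor
  · rintro ⟨⟨hc, _⟩, rfl⟩; exact ⟨hc, rfl⟩
  · rintro ⟨hc, rfl⟩; exact ⟨⟨hc, by simpa using hi⟩, rfl⟩

/- STATEMENT 19: the Basic Combinatorial Lemma. If t₁ is a λ-tableau and t₂ a
   μ-tableau (λ, μ partitions of n) such that for each i the entries of the i-th
   row of t₂ lie in distinct columns of t₁, then λ dominates μ. -/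

theorem stmt19 (n : ℕ) (lam mu : YoungDiagram) (hlam : lam.card = n) (hmu : mu.card = n)
    -- a λ-tableau and a μ-tableau (bijective fillings by {1,…,n}):
    (t₁ : lam.cells ≃ Fin n) (t₂ : mu.cells ≃ Fin n)
    -- entries of each row of t₂ lie in distinct columns of t₁:
    (h : ∀ a b : mu.cells, (a : ℕ × ℕ).1 = (b : ℕ × ℕ).1 → a ≠ b →
      ((t₁.symm (t₂ a)) : ℕ × ℕ).2 ≠ ((t₁.symm (t₂ b)) : ℕ × ℕ).2) :
    -- λ ⊵ μ:
    ∀ j : ℕ, ∑ i ∈ Finset.range j, mu.rowLen i ≤ ∑ i ∈ Finset.range j, lam.rowLen i := by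
  classical
  intro j
  -- total version of the image map
  set img : ℕ × ℕ → ℕ × ℕ := fun x => if hx : x ∈ mu.cells then
      ((t₁.symm (t₂ ⟨x, hx⟩)) : ℕ × ℕ) else x with himg
  have img_spec : ∀ (x) (hx : x ∈ mu.cells), img x = ((t₁.symm (t₂ ⟨x, hx⟩)) : ℕ × ℕ) := by
    intro x hx; exact dif_pos hx
  have img_mem : ∀ x ∈ mu.cells, img x ∈ lam.cells := by
    intro x hx; rw [img_spec x hx]; exact (t₁.symm (t₂ ⟨x, hx⟩)).2
  have img_inj : ∀ a ∈ mu.cells, ∀ b ∈ mu.cells, img a = img b → a = b := by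
    intro a ha b hb hab
    rw [img_spec a ha, img_spec b hb] at hab
    have := t₂.injective (t₁.symm.injective (Subtype.ext hab))
    exact congrArg Subtype.val this
  have h' : ∀ a ∈ mu.cells, ∀ b ∈ mu.cells, a.1 = b.1 → (img a).2 = (img b).2 → a = b := by
    intro a ha b hb hrow hcol
    by_contra hne
    rw [img_spec a ha, img_spec b hb] at hcol
    exact h ⟨a, ha⟩ ⟨b, hb⟩ hrow (fun e => hne (congrArg Subtype.val e)) hcol
  set S := mu.cells.filter (fun c => c.1 < j) with hS
  set T := lam.cells.filter (fun c => c.1 < j) with hT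
  rw [← aux_card mu j, ← aux_card lam j]
  set A : ℕ × ℕ → Finset (ℕ × ℕ) :=
    fun c => S.filter (fun d => (img d).2 = (img c).2 ∧ d.1 < c.1) with hA
  set F : ℕ × ℕ → ℕ × ℕ := fun c => ((A c).card, (img c).2) with hF
  apply Finset.card_le_card_of_injOn F
  · -- maps to
    intro c hc
    have hcmu : c ∈ mu.cells := (Finset.mem_filter.mp hc).1
    have hcj : c.1 < j := (Finset.mem_filter.mp hc).2
    have hrank_row : (A c).card ≤ c.1 := by
      have := Finset.card_le_card_of_injOn (fun d => d.1)
        (s := A c) (t := Finset.range c.1)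
        (fun d hd => by
          simp only [hA, Finset.mem_coe, Finset.mem_filter] at hd
          simpa using hd.2.2)
        (by
          intro a ha b hb hab
          simp only [Finset.mem_coe, hA, Finset.mem_filter, hS] at ha hb
          exact h' a ha.1.1 b hb.1.1 hab (ha.2.1.trans hb.2.1.symm))
      simpa using this
    have hrank_col : (A c).card < lam.colLen (img c).2 := by
      have hsub : insert c (A c) ⊆ mu.cells := by
        intro d hd
        rcases Finset.mem_insert.mp hd with rfl | hd
        · exact hcmu
        · exact (Finset.mem_filter.mp ((Finset.mem_filter.mp hd).1)).1
      have hcard : (insert c (A c)).card ≤ (lam.col (img c).2).card := by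
        apply Finset.card_le_card_of_injOn img
        · intro d hd
          have hdmu := hsub hd
          rw [Finset.mem_coe, YoungDiagram.mem_col_iff]
          refine ⟨(YoungDiagram.mem_cells _).mp (img_mem d hdmu), ?_⟩
          rcases Finset.mem_insert.mp hd with rfl | hd
          · rfl
          · exact ((Finset.mem_filter.mp hd).2).1
        · intro a ha b hb hab
          exact img_inj a (hsub ha) b (hsub hb) hab
      have hnotmem : c ∉ A c := by
        simp [hA]
      rw [Finset.card_insert_of_notMem hnotmem] at hcard
      rw [lam.colLen_eq_card]
      omega
    rw [Finset.mem_coe, Finset.mem_filter]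
    constructor
    · rw [YoungDiagram.mem_cells]
      exact YoungDiagram.mem_iff_lt_colLen.mpr hrank_col
    · exact lt_of_le_of_lt hrank_row hcj
  · -- injective
    intro a ha b hb hab
    have hamu : a ∈ mu.cells := (Finset.mem_filter.mp ha).1
    have hbmu : b ∈ mu.cells := (Finset.mem_filter.mp hb).1
    have hcol : (img a).2 = (img b).2 := by
      have := congrArg Prod.snd hab; simpa [hF] using this
    have hrank : (A a).card = (A b).card := by
      have := congrArg Prod.fst hab; simpa [hF] using this
    rcases lt_trichotomy a.1 b.1 with hlt | heq | hlt
    · exfalso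
      have hss : A a ⊂ A b := by
        constructor
        · intro d hd
          simp only [hA, Finset.mem_filter] at hd ⊢
          exact ⟨hd.1, hd.2.1.trans hcol, hd.2.2.trans hlt⟩
        · intro hsub
          have : a ∈ A b := by
            simp only [hA, Finset.mem_filter]
            exact ⟨ha, hcol, hlt⟩
          have h2 : a ∈ A a := hsub this
          simp only [hA, Finset.mem_filter] at h2
          exact absurd h2.2.2 (lt_irrefl _)
      exact absurd hrank (Finset.card_lt_card hss).ne
    · exact h' a hamu b hbmu heq hcol
    · exfalso
      have hss : A b ⊂ A a := by
        constructor
        · intro d hd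
          simp only [hA, Finset.mem_filter] at hd ⊢
          exact ⟨hd.1, hd.2.1.trans hcol.symm, hd.2.2.trans hlt⟩
        · intro hsub
          have : b ∈ A a := by
            simp only [hA, Finset.mem_filter]
            exact ⟨hb, hcol.symm, hlt⟩
          have h2 : b ∈ A b := hsub this
          simp only [hA, Finset.mem_filter] at h2
          exact absurd h2.2.2 (lt_irrefl _)
      exact absurd hrank.symm (Finset.card_lt_card hss).ne
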